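/- Let n ≥ 2, let a be a symmetric positive semidefinite n×n real matrix, and suppose there is ε > 0 such that ξᵀ a ξ ≥ ε‖ξ‖² for every ξ ∈ ℝⁿ. Then for every long-only portfolio vector π (i.e. π ∈ ℝⁿ with πᵢ ≥ 0 for all i and Σᵢ πᵢ = 1), the excess growth rate γ*_π(a) := (1/2)(Σᵢ πᵢ aᵢᵢ − Σᵢ Σⱼ πᵢ aᵢⱼ πⱼ) satisfies γ*_π(a) ≥ (ε/2)(1 − maxᵢ πᵢ). -/

import Mathlib

open Finset Matrix

theorem qform_id (n : ℕ) (a : Matrix (Fin n) (Fin n) ℝ) (hsym : a.IsSymm)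
    (π : Fin n → ℝ) (i : Fin n) :
    (fun j => (if j = i then (1:ℝ) else 0) - π j) ⬝ᵥ a.mulVec (fun j => (if j = i then (1:ℝ) else 0) - π j)
    = a i i - 2 * ∑ k, a i k * π k + ∑ j, ∑ k, π j * a j k * π k := by
  have hs : ∀ j k, a j k = a k j := fun j k => hsym.apply k j
  simp only [dotProduct, Matrix.mulVec, sub_mul, mul_sub, Finset.sum_sub_distrib, Finset.mul_sum]
  simp [ite_mul, mul_ite, Finset.sum_ite_eq', Finset.sum_sub_distrib]
  rw [Finset.sum_comm]
  have h1 : ∑ x, π x * a x i = ∑ x, a i x * π x := by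
    apply Finset.sum_congr rfl; intro x _; rw [hs x i]; ring
  have h2 : ∑ y, ∑ x, π x * (a x y * π y) = ∑ j, ∑ k, π j * a j k * π k := by
    rw [Finset.sum_comm]; apply Finset.sum_congr rfl; intro x _
    apply Finset.sum_congr rfl; intro y _; ring
  rw [h1, h2, ← Finset.mul_sum]; ring


/-- the non-degeneracy lower bound on the excess growth rate
of a long-only portfolio. -/
theorem diversity_excess_growth_lower_bound
    (n : ℕ) (hn : 2 ≤ n)
    (a : Matrix (Fin n) (Fin n) ℝ) (hsym : a.IsSymm) (hpsd : a.PosSemidef)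
    (ε : ℝ) (hε : 0 < ε)
    (hnd : ∀ ξ : Fin n → ℝ, ε * ∑ i, ξ i ^ 2 ≤ ξ ⬝ᵥ a.mulVec ξ)
    (π : Fin n → ℝ) (hπ0 : ∀ i, 0 ≤ π i) (hπ1 : ∑ i, π i = 1) :
    ε / 2 * (1 - Finset.univ.sup' ⟨⟨0, by omega⟩, Finset.mem_univ _⟩ π) ≤
      (1 / 2) * (∑ i, π i * a i i - ∑ i, ∑ j, π i * a i j * π j) := by
  set M := Finset.univ.sup' ⟨⟨0, by omega⟩, Finset.mem_univ _⟩ π with hM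
  set S := ∑ i, π i ^ 2 with hSdef
  set Q := ∑ j, ∑ k, π j * a j k * π k with hQdef
  have hMle : ∀ i, π i ≤ M := fun i => Finset.le_sup' π (Finset.mem_univ i)
  have hSM : S ≤ M := by
    calc S = ∑ i, π i * π i := by apply Finset.sum_congr rfl; intro i _; ring
    _ ≤ ∑ i, π i * M := Finset.sum_le_sum (fun i _ => mul_le_mul_of_nonneg_left (hMle i) (hπ0 i))
    _ = M := by rw [← Finset.sum_mul, hπ1, one_mul]
  -- norm of ξ_i
  have hnorm : ∀ i : Fin n, ∑ j, ((if j = i then (1:ℝ) else 0) - π j) ^ 2 = 1 - 2 * π i + S := by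
    intro i
    have : ∀ j, ((if j = i then (1:ℝ) else 0) - π j) ^ 2
        = (if j = i then (1 : ℝ) - 2 * π j else 0) + π j ^ 2 := by
      intro j; by_cases h : j = i <;> simp [h] <;> ring
    simp only [this, Finset.sum_add_distrib, Finset.sum_ite_eq', Finset.mem_univ, if_true, ← hSdef]
  -- key sum bound
  have key : ε * (1 - S) ≤ ∑ i, π i * a i i - Q := by
    have h1 : ∀ i : Fin n, π i * (ε * (1 - 2 * π i + S))
        ≤ π i * (a i i - 2 * ∑ k, a i k * π k + Q) := by
      intro i
      apply mul_le_mul_of_nonneg_left _ (hπ0 i)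
      rw [← qform_id n a hsym π i, ← hnorm i]
      exact hnd _
    have h2 := Finset.sum_le_sum (fun i (_ : i ∈ Finset.univ) => h1 i)
    have e1 : ∑ i, π i * (ε * (1 - 2 * π i + S)) = ε * (1 - S) := by
      have : ∀ i : Fin n, π i * (ε * (1 - 2 * π i + S))
          = ε * π i - 2 * ε * π i ^ 2 + ε * S * π i := by intro i; ring
      simp only [this, Finset.sum_add_distrib, Finset.sum_sub_distrib, ← Finset.mul_sum, hπ1,
        ← hSdef]
      ring
    have e2 : ∑ i, π i * (a i i - 2 * ∑ k, a i k * π k + Q) = ∑ i, π i * a i i - Q := by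
      have : ∀ i : Fin n, π i * (a i i - 2 * ∑ k, a i k * π k + Q)
          = π i * a i i - 2 * ∑ k, π i * a i k * π k + Q * π i := by
        intro i
        rw [mul_comm (π i)]
        have hA : (2 * ∑ k, a i k * π k) * π i = 2 * ∑ k, π i * a i k * π k := by
          rw [mul_assoc, Finset.sum_mul, Finset.mul_sum, Finset.mul_sum]
          apply Finset.sum_congr rfl; intro k _; ring
        rw [add_mul, sub_mul, hA]; ring
      simp only [this, Finset.sum_add_distrib, Finset.sum_sub_distrib, ← Finset.mul_sum, hπ1,
        ← hQdef]
      ring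
    rw [e1, e2] at h2
    exact h2
  have hfin : ε * (1 - M) ≤ ε * (1 - S) := by
    apply mul_le_mul_of_nonneg_left _ hε.le
    linarith
  nlinarith [key, hfin]
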